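/- Let Π be a ground HEX-program whose atom dependency graph contains no e-cycle under →ᵈ = → ∪ →⁻¹ ∪ →ₑ, let A be a complete model of Π with compatible extension Â over the guessing program Π̂. If Â intersects no nonempty unfounded set of Π̂ wrt. Â, then A is unfounded-free for Π, i.e., Aᵀ ∩ X = ∅ for every unfounded set X of Π wrt. A. -/

import Mathlib

/-- A ground external atom: a set of input atoms and an oracle function whose
value depends only on the assignment restricted to the input atoms. -/
structure ExtAtom (Atom : Type) where
  inputs : Finset Atom
  eval : (Atom → Bool) → Bool
  dep : ∀ A B : Atom → Bool, (∀ a ∈ inputs, A a = B a) → eval A = eval B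

/-- A ground HEX-rule: head, ordinary positive body, ordinary negative body,
positive external body, negative external body. -/
structure Rule (Atom : Type) where
  head : Finset Atom
  posOrd : Finset Atom
  negOrd : Finset Atom
  posExt : List (ExtAtom Atom)
  negExt : List (ExtAtom Atom)

/-- A ground HEX-program is a set of rules (finiteness is assumed explicitly). -/
abbrev Program (Atom : Type) := Set (Rule Atom)

variable {Atom : Type} [DecidableEq Atom]

/-- The ordinary atoms occurring in a rule. -/
def Rule.atoms (r : Rule Atom) : Finset Atom :=
  r.head ∪ r.posOrd ∪ r.negOrd ∪
    ((r.posExt ++ r.negExt).foldr (fun e s => e.inputs ∪ s) ∅)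

/-- The ordinary atoms `A(Π)` occurring in a program. -/
def progAtoms (P : Program Atom) : Set Atom := ⋃ r ∈ P, (r.atoms : Set Atom)

/-- `A ∪̇¬ X`: set all atoms of `X` to false in `A`. -/
def unplug (A : Atom → Bool) (X : Finset Atom) : Atom → Bool :=
  fun a => A a && !(decide (a ∈ X))

/-- All body literals of `r` are true wrt. the complete assignment `B`. -/
def Rule.bodyTrueAt (r : Rule Atom) (B : Atom → Bool) : Prop :=
  (∀ a ∈ r.posOrd, B a = true) ∧ (∀ a ∈ r.negOrd, B a = false) ∧
  (∀ e ∈ r.posExt, e.eval B = true) ∧ (∀ e ∈ r.negExt, e.eval B = false)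

/-- Some body literal of `r` is false wrt. the complete assignment `B`. -/
def Rule.bodyFalseAt (r : Rule Atom) (B : Atom → Bool) : Prop :=
  (∃ a ∈ r.posOrd, B a = false) ∨ (∃ a ∈ r.negOrd, B a = true) ∨
  (∃ e ∈ r.posExt, e.eval B = false) ∨ (∃ e ∈ r.negExt, e.eval B = true)

/-- `X` is an unfounded set of `P` wrt. the complete assignment `A`
(Definition of unfounded sets for HEX-programs). -/
def isUnfounded (P : Program Atom) (A : Atom → Bool) (X : Finset Atom) : Prop :=
  ∀ r ∈ P, (r.head ∩ X).Nonempty →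
    r.bodyFalseAt A ∨ r.bodyFalseAt (unplug A X) ∨
    ∃ h ∈ r.head, h ∉ X ∧ A h = true

/-- `A` is a (complete) model of `P`. -/
def isModel (A : Atom → Bool) (P : Program Atom) : Prop :=
  ∀ r ∈ P, r.bodyTrueAt A → ∃ h ∈ r.head, A h = true

/-- Ordinary dependency `a → b`. -/
def ordDep (P : Program Atom) (a b : Atom) : Prop :=
  ∃ r ∈ P, a ∈ r.head ∧ b ∈ r.posOrd

/-- External dependency (e-edge) `a →ₑ b`. -/
def eDep (P : Program Atom) (a b : Atom) : Prop :=
  ∃ r ∈ P, a ∈ r.head ∧ ∃ e ∈ r.posExt ++ r.negExt, b ∈ e.inputs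

/-- The relation `→ᵈ = → ∪ →⁻¹ ∪ →ₑ`. -/
def dDep (P : Program Atom) (a b : Atom) : Prop :=
  ordDep P a b ∨ ordDep P b a ∨ eDep P a b

/-- `C` is a cut of the unfounded set `U`: `C ⊆ U`, `C` has no incoming or
internal e-edges from `U`, and there are no ordinary edges between `C` and
`U \ C` in either direction. -/
def isCut (P : Program Atom) (U C : Finset Atom) : Prop :=
  C ⊆ U ∧ (∀ a ∈ C, ∀ b ∈ U, ¬ eDep P b a) ∧
  (∀ a ∈ C, ∀ b ∈ U \ C, ¬ ordDep P a b ∧ ¬ ordDep P b a)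

/-- Some body literal of the rule corresponding to `r` in the guessing program
`Π̂` is false wrt. `B` extended to the compatible extension `Â` of `A`:
ordinary literals are evaluated at `B`, while external replacement atoms obtain
(by compatibility) the oracle value at `A`. -/
def Rule.bodyFalseHat (r : Rule Atom) (A B : Atom → Bool) : Prop :=
  (∃ a ∈ r.posOrd, B a = false) ∨ (∃ a ∈ r.negOrd, B a = true) ∨
  (∃ e ∈ r.posExt, e.eval A = false) ∨ (∃ e ∈ r.negExt, e.eval A = true)

/-- `X` (a set of ordinary atoms) is an unfounded set of the guessing program
`Π̂` wrt. the compatible extension `Â` of `A`.  Since `X` contains only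
ordinary atoms and the guessing rules have only replacement atoms in their
heads, this unfolds to the condition below, where replacement atoms keep their
(compatible) value under `Â ∪̇¬ X`. -/
def isUnfoundedHat (P : Program Atom) (A : Atom → Bool) (X : Finset Atom) : Prop :=
  ∀ r ∈ P, (r.head ∩ X).Nonempty →
    r.bodyFalseHat A A ∨ r.bodyFalseHat A (unplug A X) ∨
    ∃ h ∈ r.head, h ∉ X ∧ A h = true

/-- The set `S` contains a cycle under `→ᵈ` that uses at least one e-edge. -/
def hasECycleIn (P : Program Atom) (S : Set Atom) : Prop :=
  ∃ (n : ℕ) (c : ℕ → Atom),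
    (∀ i ≤ n, dDep P (c i) (c (i+1))) ∧ c 0 = c (n+1) ∧
    (∀ i ≤ n+1, c i ∈ S) ∧ ∃ i ≤ n, eDep P (c i) (c (i+1))

/-- `a` is a cyclic input atom: some `b` with `b →ₑ a` and a path from `a`
to `b` under `→ᵈ`. -/
def cyclicInput (P : Program Atom) (a : Atom) : Prop :=
  ∃ b, eDep P b a ∧ Relation.ReflTransGen (dDep P) a b

/-- The FLP-reduct `fΠ^A`. -/
def flpReduct (P : Program Atom) (A : Atom → Bool) : Program Atom :=
  { r ∈ P | r.bodyTrueAt A }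

/-- `A₁ ≤_Π A₂`. -/
def leP (P : Program Atom) (A₁ A₂ : Atom → Bool) : Prop :=
  ∀ a ∈ progAtoms P, A₁ a = true → A₂ a = true

/-- `A` is an answer set of `P`: a `≤_Π`-minimal model of the FLP-reduct. -/
def isAnswerSet (P : Program Atom) (A : Atom → Bool) : Prop :=
  isModel A (flpReduct P A) ∧
  ∀ A' : Atom → Bool, isModel A' (flpReduct P A) → leP P A' A → leP P A A'

/-- The dependency relation `→ ∪ →ₑ` used for strongly connected components. -/
def dep (P : Program Atom) (a b : Atom) : Prop := ordDep P a b ∨ eDep P a b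

/-- Mutual reachability under `→ ∪ →ₑ`. -/
def sameSCC (P : Program Atom) (a b : Atom) : Prop :=
  Relation.ReflTransGen (dep P) a b ∧ Relation.ReflTransGen (dep P) b a

/-- The strongly connected component of `a` under `→ ∪ →ₑ`. -/
def scc (P : Program Atom) (a : Atom) : Set Atom := { b | sameSCC P a b }

/-- The subprogram `Π_C` associated with a component `C`. -/
def subprog (P : Program Atom) (C : Set Atom) : Program Atom :=
  { r ∈ P | ∃ h ∈ r.head, h ∈ C }

/-- Turn a `ReflTransGen` path into an indexed finite walk. -/
lemma reflTransGen_fn {α : Type*} {R : α → α → Prop} {a b : α}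
    (h : Relation.ReflTransGen R a b) :
    ∃ n, ∃ c : ℕ → α, c 0 = a ∧ c n = b ∧ ∀ i < n, R (c i) (c (i+1)) := by
  induction h with
  | refl => exact ⟨0, fun _ => a, rfl, rfl, by omega⟩
  | @tail x y hax hxy ih =>
    obtain ⟨n, c, h0, hn, hstep⟩ := ih
    refine ⟨n+1, fun i => if i = n+1 then y else c i, ?_, ?_, ?_⟩
    · beta_reduce; rw [if_neg (show ¬ (0 = n+1) by omega)]; exact h0
    · beta_reduce; exact if_pos rfl
    · intro i hi
      by_cases hin : i = n
      · beta_reduce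
        rw [hin, if_neg (show ¬ (n = n+1) by omega), if_pos rfl, hn]
        exact hxy
      · beta_reduce
        rw [if_neg (show ¬ (i = n+1) by omega), if_neg (show ¬ (i+1 = n+1) by omega)]
        exact hstep i (by omega)

/-- An e-edge `b →ₑ a` together with a `→ᵈ`-path from `a` back to `b`
yields an e-cycle. -/
lemma ecycle_of_back {P : Program Atom} {a b : Atom}
    (he : eDep P b a) (hp : Relation.ReflTransGen (dDep P) a b) :
    hasECycleIn P (Set.univ : Set Atom) := by
  obtain ⟨n, c, h0, hn, hstep⟩ := reflTransGen_fn hp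
  refine ⟨n, fun i => if i = n+1 then a else c i, ?_, ?_,
    fun _ _ => Set.mem_univ _, n, le_refl n, ?_⟩
  · intro i hi
    by_cases hin : i = n
    · beta_reduce
      rw [hin, if_neg (show ¬ (n = n+1) by omega), if_pos rfl, hn]
      exact Or.inr (Or.inr he)
    · beta_reduce
      rw [if_neg (show ¬ (i = n+1) by omega), if_neg (show ¬ (i+1 = n+1) by omega)]
      exact hstep i (by omega)
  · beta_reduce
    rw [if_neg (show ¬ (0 = n+1) by omega), if_pos rfl, h0]
  · beta_reduce
    rw [if_neg (show ¬ (n = n+1) by omega), if_pos rfl, hn]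
    exact he

/-- Restricting an unfounded set to its true atoms preserves unfoundedness. -/
lemma unfounded_filter {P : Program Atom} {A : Atom → Bool} {X : Finset Atom}
    (h : isUnfounded P A X) :
    isUnfounded P A (X.filter (fun y => A y = true)) := by
  have hup : unplug A (X.filter (fun y => A y = true)) = unplug A X := by
    funext x
    by_cases hx : A x = true <;>
      simp [unplug, hx, Finset.mem_filter]
  intro r hr hne
  have hne' : (r.head ∩ X).Nonempty := by
    obtain ⟨x, hx⟩ := hne
    rw [Finset.mem_inter, Finset.mem_filter] at hx
    exact ⟨x, Finset.mem_inter.2 ⟨hx.1, hx.2.1⟩⟩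
  rcases h r hr hne' with h1 | h2 | h3
  · exact Or.inl h1
  · rw [hup]; exact Or.inr (Or.inl h2)
  · obtain ⟨hh, hmem, hnX, hA⟩ := h3
    exact Or.inr (Or.inr ⟨hh, hmem, fun hc => hnX (Finset.mem_of_mem_filter _ hc), hA⟩)

/-- Removing a cut from an unfounded set preserves unfoundedness. -/
lemma unfounded_sdiff {P : Program Atom} {A : Atom → Bool} {U C : Finset Atom}
    (hCU : C ⊆ U)
    (hc1 : ∀ a ∈ C, ∀ b ∈ U, ¬ eDep P b a)
    (hc2 : ∀ a ∈ C, ∀ b ∈ U \ C, ¬ ordDep P a b ∧ ¬ ordDep P b a)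
    (hU : isUnfounded P A U) : isUnfounded P A (U \ C) := by
  intro r hr hne
  obtain ⟨h₀, hh₀⟩ := hne
  rw [Finset.mem_inter] at hh₀
  have hh₀U : h₀ ∈ U := (Finset.mem_sdiff.1 hh₀.2).1
  have hne' : (r.head ∩ U).Nonempty := ⟨h₀, Finset.mem_inter.2 ⟨hh₀.1, hh₀U⟩⟩
  have hext : ∀ e ∈ r.posExt ++ r.negExt,
      e.eval (unplug A U) = e.eval (unplug A (U \ C)) := by
    intro e he
    apply e.dep
    intro x hx
    have hxC : x ∉ C := fun hxC =>
      hc1 x hxC h₀ hh₀U ⟨r, hr, hh₀.1, e, he, hx⟩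
    simp [unplug, Finset.mem_sdiff, hxC]
  rcases hU r hr hne' with h1 | h2 | h3
  · exact Or.inl h1
  · refine Or.inr (Or.inl ?_)
    rcases h2 with ⟨x, hx, hfx⟩ | ⟨x, hx, htx⟩ | ⟨e, he, hve⟩ | ⟨e, he, hve⟩
    · refine Or.inl ⟨x, hx, ?_⟩
      by_cases hxC : x ∈ C
      · exact absurd ⟨r, hr, hh₀.1, hx⟩ (hc2 x hxC h₀ hh₀.2).2
      · have : unplug A (U \ C) x = unplug A U x := by
          simp [unplug, Finset.mem_sdiff, hxC]
        rw [this]; exact hfx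
    · refine Or.inr (Or.inl ⟨x, hx, ?_⟩)
      simp only [unplug, Bool.and_eq_true, Bool.not_eq_true',
        decide_eq_false_iff_not] at htx
      simp only [unplug, Bool.and_eq_true, Bool.not_eq_true',
        decide_eq_false_iff_not, Finset.mem_sdiff]
      exact ⟨htx.1, fun hc => htx.2 hc.1⟩
    · exact Or.inr (Or.inr (Or.inl ⟨e, he, by
        rw [← hext e (List.mem_append_left _ he)]; exact hve⟩))
    · exact Or.inr (Or.inr (Or.inr ⟨e, he, by
        rw [← hext e (List.mem_append_right _ he)]; exact hve⟩))
  · obtain ⟨hh, hm, hnU, hA⟩ := h3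
    exact Or.inr (Or.inr ⟨hh, hm, fun hc => hnU (Finset.mem_sdiff.1 hc).1, hA⟩)

/-- An unfounded set without internal e-edges is unfounded for the guessing
program. -/
lemma hat_of_no_internal {P : Program Atom} {A : Atom → Bool} {U : Finset Atom}
    (hU : isUnfounded P A U)
    (hE : ∀ b ∈ U, ∀ c ∈ U, ¬ eDep P b c) : isUnfoundedHat P A U := by
  intro r hr hne
  obtain ⟨h₀, hh₀⟩ := hne
  rw [Finset.mem_inter] at hh₀
  have hext : ∀ e ∈ r.posExt ++ r.negExt, e.eval (unplug A U) = e.eval A := by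
    intro e he
    apply e.dep
    intro x hx
    have hxU : x ∉ U := fun hxU => hE h₀ hh₀.2 x hxU ⟨r, hr, hh₀.1, e, he, hx⟩
    simp [unplug, hxU]
  rcases hU r hr ⟨h₀, Finset.mem_inter.2 hh₀⟩ with h1 | h2 | h3
  · exact Or.inl h1
  · refine Or.inr (Or.inl ?_)
    rcases h2 with h | h | ⟨e, he, hv⟩ | ⟨e, he, hv⟩
    · exact Or.inl h
    · exact Or.inr (Or.inl h)
    · exact Or.inr (Or.inr (Or.inl ⟨e, he, by
        rw [← hext e (List.mem_append_left _ he)]; exact hv⟩))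
    · exact Or.inr (Or.inr (Or.inr ⟨e, he, by
        rw [← hext e (List.mem_append_right _ he)]; exact hv⟩))
  · exact Or.inr (Or.inr h3)

/-- Main descent: a nonempty unfounded set consisting of true atoms yields a
contradiction. -/
lemma key_contra {P : Program Atom} {A : Atom → Bool}
    (hnoc : ¬ hasECycleIn P (Set.univ : Set Atom))
    (hhat : ∀ U : Finset Atom, U.Nonempty → ↑U ⊆ progAtoms P →
      isUnfoundedHat P A U → ∀ a ∈ U, A a = false) :
    ∀ (n : ℕ) (U : Finset Atom), U.card = n → ↑U ⊆ progAtoms P →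
      isUnfounded P A U → (∀ a ∈ U, A a = true) → U.Nonempty → False := by
  intro n
  induction n using Nat.strong_induction_on with
  | _ n ih =>
    intro U hcard hsub hun htrue hne
    classical
    by_cases hE : ∃ b ∈ U, ∃ c ∈ U, eDep P b c
    · -- there is an internal e-edge: remove a cut and recurse
      obtain ⟨b0, hb0, c0, hc0, he0⟩ := hE
      set RR : Atom → Atom → Prop :=
        fun y z => y ∈ U ∧ z ∈ U ∧ (ordDep P y z ∨ ordDep P z y) with hRR
      set Bad : Atom → Prop :=
        fun x => ∃ b ∈ U, ∃ a, eDep P b a ∧ Relation.ReflTransGen RR a x with hBadDef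
      set C : Finset Atom := U.filter (fun x => ¬ Bad x) with hCdef
      have hCU : C ⊆ U := Finset.filter_subset _ _
      have hnotbad : ∀ a ∈ C, ¬ Bad a := fun a ha => (Finset.mem_filter.1 ha).2
      have hbadV : ∀ b ∈ U, b ∉ C → Bad b := by
        intro b hb hbc
        by_contra h
        exact hbc (Finset.mem_filter.2 ⟨hb, h⟩)
      have hc1 : ∀ a ∈ C, ∀ b ∈ U, ¬ eDep P b a := by
        intro a ha b hb he
        exact hnotbad a ha ⟨b, hb, a, he, Relation.ReflTransGen.refl⟩
      have hc2 : ∀ a ∈ C, ∀ b ∈ U \ C, ¬ ordDep P a b ∧ ¬ ordDep P b a := by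
        intro a ha b hb
        rw [Finset.mem_sdiff] at hb
        obtain ⟨b', hb', a', he', hpath⟩ := hbadV b hb.1 hb.2
        constructor
        · intro ho
          exact hnotbad a ha ⟨b', hb', a', he',
            hpath.tail ⟨hb.1, hCU ha, Or.inr ho⟩⟩
        · intro ho
          exact hnotbad a ha ⟨b', hb', a', he',
            hpath.tail ⟨hb.1, hCU ha, Or.inl ho⟩⟩
      have hCne : C.Nonempty := by
        by_contra hCe
        have hallbad : ∀ x ∈ U, Bad x := by
          intro x hx
          by_contra hbx
          exact hCe ⟨x, Finset.mem_filter.2 ⟨hx, hbx⟩⟩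
        choose! bf hbfU af haf hpathf using hallbad
        let seq : ℕ → Atom := fun k => Nat.rec b0 (fun _ y => bf y) k
        have hseqU : ∀ k, seq k ∈ U := by
          intro k
          induction k with
          | zero => exact hb0
          | succ k ihk => exact hbfU _ ihk
        have hRRd : ∀ y z, RR y z → dDep P y z := by
          intro y z h
          rcases h.2.2 with h' | h'
          · exact Or.inl h'
          · exact Or.inr (Or.inl h')
        have hstep : ∀ k, Relation.ReflTransGen (dDep P) (seq (k+1)) (seq k) := by
          intro k
          have h1 : eDep P (bf (seq k)) (af (seq k)) := haf _ (hseqU k)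
          have h2 : Relation.ReflTransGen (dDep P) (af (seq k)) (seq k) :=
            Relation.ReflTransGen.mono hRRd _ _ (hpathf _ (hseqU k))
          exact Relation.ReflTransGen.head (Or.inr (Or.inr h1)) h2
        have htrans : ∀ m k, m ≤ k →
            Relation.ReflTransGen (dDep P) (seq k) (seq m) := by
          intro m k hmk
          induction hmk with
          | refl => exact Relation.ReflTransGen.refl
          | @step k hk ihk => exact (hstep k).trans ihk
        have hfin : ∀ i j : ℕ, i < j → seq i = seq j → False := by
          intro i j hij heq
          obtain ⟨k, rfl⟩ : ∃ k, j = k + 1 := ⟨j - 1, by omega⟩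
          have h1 : eDep P (seq (k+1)) (af (seq k)) := haf _ (hseqU k)
          have h2 : Relation.ReflTransGen (dDep P) (af (seq k)) (seq (k+1)) := by
            have ha2 : Relation.ReflTransGen (dDep P) (af (seq k)) (seq k) :=
              Relation.ReflTransGen.mono hRRd _ _ (hpathf _ (hseqU k))
            have h3 := htrans i k (by omega)
            rw [heq] at h3
            exact ha2.trans h3
          exact hnoc (ecycle_of_back h1 h2)
        have hmap : ∀ i ∈ Finset.range (U.card + 1), seq i ∈ U :=
          fun i _ => hseqU i
        have hlt : U.card < (Finset.range (U.card + 1)).card := by simp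
        obtain ⟨i, hi, j, hj, hij, heq⟩ :=
          Finset.exists_ne_map_eq_of_card_lt_of_maps_to hlt hmap
        rcases lt_or_gt_of_ne hij with h | h
        · exact hfin i j h heq
        · exact hfin j i h heq.symm
      have hVne : (U \ C).Nonempty :=
        ⟨c0, Finset.mem_sdiff.2 ⟨hc0, fun hcC =>
          hnotbad c0 hcC ⟨b0, hb0, c0, he0, Relation.ReflTransGen.refl⟩⟩⟩
      have hVun := unfounded_sdiff hCU hc1 hc2 hun
      have hVcard : (U \ C).card < n := by
        rw [← hcard, Finset.card_sdiff_of_subset hCU]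
        have h1 := Finset.card_le_card hCU
        have h2 := Finset.card_pos.2 hCne
        omega
      exact ih _ hVcard _ rfl
        (fun x hx => hsub (by
          simp only [Finset.coe_sdiff, Set.mem_diff] at hx
          exact hx.1))
        hVun
        (fun a ha => htrue a (Finset.mem_sdiff.1 ha).1)
        hVne
    · -- no internal e-edge: U is unfounded for the guessing program
      have hhatU := hat_of_no_internal hun
        (fun b hb c hc he => hE ⟨b, hb, c, hc, he⟩)
      obtain ⟨x, hx⟩ := hne
      have hfalse := hhat U ⟨x, hx⟩ hsub hhatU x hx
      rw [htrue x hx] at hfalse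
      simp at hfalse

/-- If the atom dependency graph of `Π` has no e-cycle under `→ᵈ` and `Â`
intersects no nonempty unfounded set of `Π̂` wrt. `Â`, then the complete model
`A` is unfounded-free for `Π`. -/
theorem no_ecycle_unfounded_free (P : Program Atom) (hP : P.Finite)
    (A : Atom → Bool) (hm : isModel A P)
    (hnoc : ¬ hasECycleIn P (Set.univ : Set Atom))
    (hhat : ∀ U : Finset Atom, U.Nonempty → ↑U ⊆ progAtoms P →
      isUnfoundedHat P A U → ∀ a ∈ U, A a = false) :
    ∀ X : Finset Atom, ↑X ⊆ progAtoms P → isUnfounded P A X →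
      ∀ a ∈ X, A a = false := by
  intro X hX hun a haX
  by_contra hA
  have hAa : A a = true := by
    cases h : A a
    · exact absurd h hA
    · rfl
  classical
  set X' := X.filter (fun y => A y = true) with hX'
  have haX' : a ∈ X' := Finset.mem_filter.2 ⟨haX, hAa⟩
  exact key_contra hnoc hhat X'.card X' rfl
    ((Finset.coe_subset.2 (Finset.filter_subset _ _)).trans hX)
    (unfounded_filter hun)
    (fun x hx => (Finset.mem_filter.1 hx).2)
    ⟨a, haX'⟩
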